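/- For any game Γ and exploration rates T_1,...,T_N > 0, every Quantal Response Equilibrium of Γ is a (max_k T_k)(max_k ln n_k)-approximate Nash equilibrium of Γ. -/

import Mathlib

open Function

/-- A mixed strategy: a point of the probability simplex. -/
def IsSimplex {n : ℕ} (x : Fin n → ℝ) : Prop :=
  (∀ i, 0 ≤ x i) ∧ ∑ i, x i = 1

lemma entropy_le_log {n : ℕ} (p : Fin n → ℝ) (hpos : ∀ i, 0 < p i)
    (hsum : ∑ i, p i = 1) : -∑ i, p i * Real.log (p i) ≤ Real.log n := by
  have hn : 0 < n := by
    rcases Nat.eq_zero_or_pos n with h | h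
    · exfalso
      have : IsEmpty (Fin n) := by rw [h]; infer_instance
      simp [Finset.univ_eq_empty] at hsum
    · exact h
  have key : ∑ i, p i * Real.log (1 / (n * p i)) ≤ ∑ i, p i * (1 / (n * p i) - 1) := by
    apply Finset.sum_le_sum
    intro i _
    refine mul_le_mul_of_nonneg_left ?_ (hpos i).le
    have hn' : (0:ℝ) < n := by exact_mod_cast hn
    have := hpos i
    exact Real.log_le_sub_one_of_pos (by positivity)
  have h1 : ∑ i, p i * (1 / (n * p i) - 1) = 0 := by
    have he : ∀ i ∈ Finset.univ, p i * (1 / (n * p i) - 1) = 1 / n - p i := by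
      intro i _
      have hpi := (hpos i).ne'
      have hn' : (n : ℝ) ≠ 0 := by positivity
      field_simp
    rw [Finset.sum_congr rfl he, Finset.sum_sub_distrib, hsum]
    simp
    field_simp
    norm_num
  have h2 : ∑ i, p i * Real.log (1 / (n * p i))
      = -Real.log n - ∑ i, p i * Real.log (p i) := by
    have he : ∀ i ∈ Finset.univ, p i * Real.log (1 / (n * p i))
        = p i * (-Real.log n) - p i * Real.log (p i) := by
      intro i _
      rw [one_div, Real.log_inv, Real.log_mul (by positivity) (hpos i).ne']
      ring
    rw [Finset.sum_congr rfl he, Finset.sum_sub_distrib, ← Finset.sum_mul, hsum]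
    ring
  linarith

/-- Every Quantal Response Equilibrium of a game `Γ` is a
`(max_k T_k)(max_k ln n_k)`-approximate Nash equilibrium of `Γ`. -/
theorem qre_is_approx_nash {N : ℕ} (hN : 0 < N) {n : Fin N → ℕ}
    -- rewards: `r x k` is the reward vector of player `k`, depending only on `x_{-k}`
    (r : (∀ l, Fin (n l) → ℝ) → ∀ k, Fin (n k) → ℝ)
    (hr : ∀ (k : Fin N) (x : ∀ l, Fin (n l) → ℝ) (y : Fin (n k) → ℝ),
      r (update x k y) k = r x k)
    -- payoffs are linear in own strategy: `u_k(x) = ⟨x_k, r_k(x_{-k})⟩`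
    (u : (∀ l, Fin (n l) → ℝ) → Fin N → ℝ)
    (hu : ∀ x k, u x k = ∑ i, x k i * r x k i)
    (T : Fin N → ℝ) (hT : ∀ k, 0 < T k)
    (p : ∀ l, Fin (n l) → ℝ) (hp : ∀ l, IsSimplex (p l))
    -- `p` is a QRE of `Γ`:
    (hQRE : ∀ (k : Fin N) (i : Fin (n k)),
      p k i = Real.exp (r p k i / T k) / ∑ j, Real.exp (r p k j / T k)) :
    -- `p` is a `(max_k T_k)(max_k ln n_k)`-approximate Nash equilibrium of `Γ`:
    ∀ (k : Fin N) (y : Fin (n k) → ℝ), IsSimplex y →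
      u (update p k y) k ≤ u p k + (⨆ k, T k) * (⨆ k, Real.log (n k)) := by
  intro k y hy
  haveI : Nonempty (Fin N) := Fin.pos_iff_nonempty.mp hN
  have ht := hT k
  have hnk : 0 < n k := by
    rcases Nat.eq_zero_or_pos (n k) with h | h
    · exfalso
      have hs := (hp k).2
      have : IsEmpty (Fin (n k)) := by rw [h]; infer_instance
      simp [Finset.univ_eq_empty] at hs
    · exact h
  haveI : Nonempty (Fin (n k)) := Fin.pos_iff_nonempty.mp hnk
  set Z : ℝ := ∑ j, Real.exp (r p k j / T k) with hZdef
  have hZ : 0 < Z := Finset.sum_pos (fun j _ => Real.exp_pos _) Finset.univ_nonempty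
  have hppos : ∀ i, 0 < p k i := by
    intro i; rw [hQRE k i]; positivity
  have hrlog : ∀ i, r p k i = T k * (Real.log (p k i) + Real.log Z) := by
    intro i
    have := hQRE k i
    have hlog : Real.log (p k i) = r p k i / T k - Real.log Z := by
      rw [this, Real.log_div (Real.exp_pos _).ne' hZ.ne', Real.log_exp]
    rw [hlog]
    field_simp
    ring
  -- rewrite the two utilities
  have hLHS : u (update p k y) k = ∑ i, y i * r p k i := by
    rw [hu]
    simp only [update_self, hr]
  have hRHS : u p k = ∑ i, p k i * r p k i := hu p k
  rw [hLHS, hRHS]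
  -- express via logs
  have hsumy : ∑ i, y i * r p k i
      = T k * (∑ i, y i * Real.log (p k i)) + T k * Real.log Z := by
    have he : ∀ i ∈ Finset.univ, y i * r p k i
        = T k * (y i * Real.log (p k i)) + (T k * Real.log Z) * y i := by
      intro i _; rw [hrlog i]; ring
    rw [Finset.sum_congr rfl he, Finset.sum_add_distrib, ← Finset.mul_sum,
      ← Finset.mul_sum, hy.2, mul_one]
  have hsump : ∑ i, p k i * r p k i
      = T k * (∑ i, p k i * Real.log (p k i)) + T k * Real.log Z := by
    have he : ∀ i ∈ Finset.univ, p k i * r p k i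
        = T k * (p k i * Real.log (p k i)) + (T k * Real.log Z) * p k i := by
      intro i _; rw [hrlog i]; ring
    rw [Finset.sum_congr rfl he, Finset.sum_add_distrib, ← Finset.mul_sum,
      ← Finset.mul_sum, (hp k).2, mul_one]
  rw [hsumy, hsump]
  have hA : ∑ i, y i * Real.log (p k i) ≤ 0 := by
    apply Finset.sum_nonpos
    intro i _
    apply mul_nonpos_of_nonneg_of_nonpos (hy.1 i)
    apply Real.log_nonpos (hppos i).le
    calc p k i ≤ ∑ j, p k j :=
          Finset.single_le_sum (fun j _ => (hppos j).le) (Finset.mem_univ i)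
      _ = 1 := (hp k).2
  have hB : -∑ i, p k i * Real.log (p k i) ≤ Real.log (n k) :=
    entropy_le_log (p k) hppos (hp k).2
  have hC : T k ≤ ⨆ k, T k := le_ciSup (Set.Finite.bddAbove (Set.finite_range T)) k
  have hD : Real.log (n k) ≤ ⨆ k, Real.log (n k) :=
    le_ciSup (f := fun k => Real.log (n k))
      (Set.Finite.bddAbove (Set.finite_range _)) k
  have hE : 0 ≤ Real.log (n k) := Real.log_nonneg (by exact_mod_cast hnk)
  nlinarith [mul_nonpos_of_nonneg_of_nonpos ht.le hA,
    mul_le_mul_of_nonneg_left hB ht.le,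
    mul_le_mul_of_nonneg_right hC hE,
    mul_le_mul_of_nonneg_left hD (le_trans ht.le hC)]
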